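/- Let n ≥ 1, let X : [3n]² → {0,1}, let S ⊆ [2n]², and let k = (k₁,k₂) ∈ [n]². Define A, B : [3n]² → ℤ as follows. For i = (i₁,i₂) ∈ [3n]², A(i) = 6n(i₁+i₂) + 2i₁ + X(i). For j = (j₁,j₂) ∈ [3n]², writing j' = (j₁−k₁, j₂−k₂): B(j) = 6n(j₁'+j₂') + 2j₁' + X(j') if j' ∈ S; B(j) = 6n(j₁'+j₂') + 2j₁' + (1 − X(j')) if j' ∈ [3n]² ∖ S; and B(j) = 6n(j₁'+j₂') + 2j₁' if j' ∉ [3n]². Then: (i) A and B are each injective and strictly monotone with respect to the coordinatewise partial order (i ≺ j and i ≠ j imply A(i) < A(j) and B(i) < B(j)); and (ii) for all i, j ∈ [3n]², A(i) = B(j) if and only if i ∈ S and j = i + k (coordinatewise addition). -/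
import Mathlib

/-- `p` lies in the grid `[m]²` (coordinates in `ℤ`). -/
def inGrid (m : ℤ) (p : ℤ × ℤ) : Prop :=
  1 ≤ p.1 ∧ p.1 ≤ m ∧ 1 ≤ p.2 ∧ p.2 ≤ m

private lemma keyEq (n a b c d ea eb : ℤ) (hn : 1 ≤ n)
    (h1 : c - a ≤ 3*n - 1) (h2 : a - c ≤ 4*n - 1)
    (h3 : d - b ≤ 3*n - 1)
    (hea : 0 ≤ ea) (hea' : ea ≤ 1) (heb : 0 ≤ eb) (heb' : eb ≤ 1)
    (h : 6*n*(a+b) + 2*a + ea = 6*n*(c+d) + 2*c + eb) :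
    a = c ∧ b = d ∧ ea = eb := by
  have h3' : 6*n*(a+b-c-d) = 2*(c-a) + (eb-ea) := by linear_combination h
  have hm0 : a+b-c-d = 0 := by
    rcases le_or_gt (a+b-c-d) (-2) with h4|h4
    · have hx : 6*n*(a+b-c-d) ≤ 6*n*(-2) :=
        mul_le_mul_of_nonneg_left h4 (by linarith)
      linarith
    rcases le_or_gt 1 (a+b-c-d) with h5|h5
    · have hx : 6*n*1 ≤ 6*n*(a+b-c-d) := mul_le_mul_of_nonneg_left h5 (by linarith)
      linarith
    rcases (by omega : a+b-c-d = -1 ∨ a+b-c-d = 0) with h6|h6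
    · rw [h6] at h3'
      omega
    · exact h6
  have h7 : 6*n*(a+b) = 6*n*(c+d) := by
    have hcd : a+b = c+d := by omega
    rw [hcd]
  have h8 : 2*a + ea = 2*c + eb := by linarith
  exact ⟨by omega, by omega, by omega⟩

theorem stmt13 (n : ℕ) (hn : 1 ≤ n)
    (X : ℤ × ℤ → ℤ) (hX : ∀ p, inGrid (3 * n) p → X p = 0 ∨ X p = 1)
    (S : Set (ℤ × ℤ)) (hS : ∀ p ∈ S, inGrid (2 * n) p)
    (k : ℤ × ℤ) (hk : inGrid n k)
    (A B : ℤ × ℤ → ℤ)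
    (hA : ∀ p, inGrid (3 * n) p → A p = 6 * n * (p.1 + p.2) + 2 * p.1 + X p)
    (hB1 : ∀ p, inGrid (3 * n) p → p - k ∈ S →
      B p = 6 * n * ((p.1 - k.1) + (p.2 - k.2)) + 2 * (p.1 - k.1) + X (p - k))
    (hB2 : ∀ p, inGrid (3 * n) p → p - k ∉ S → inGrid (3 * n) (p - k) →
      B p = 6 * n * ((p.1 - k.1) + (p.2 - k.2)) + 2 * (p.1 - k.1) + (1 - X (p - k)))
    (hB3 : ∀ p, inGrid (3 * n) p → ¬ inGrid (3 * n) (p - k) →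
      B p = 6 * n * ((p.1 - k.1) + (p.2 - k.2)) + 2 * (p.1 - k.1)) :
    (Set.InjOn A {p | inGrid (3 * n) p} ∧ Set.InjOn B {p | inGrid (3 * n) p} ∧
      (∀ p q, inGrid (3 * n) p → inGrid (3 * n) q →
        p.1 ≤ q.1 → p.2 ≤ q.2 → p ≠ q → A p < A q ∧ B p < B q)) ∧
    (∀ i j, inGrid (3 * n) i → inGrid (3 * n) j →
      (A i = B j ↔ i ∈ S ∧ j = i + k)) := by
  have hn' : (1:ℤ) ≤ (n:ℤ) := by exact_mod_cast hn
  obtain ⟨hk1, hk2, hk3, hk4⟩ := hk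
  have hX' : ∀ p, inGrid (3 * n) p → 0 ≤ X p ∧ X p ≤ 1 := by
    intro p hp; rcases hX p hp with h|h <;> omega
  have sub1 : ∀ p : ℤ × ℤ, (p - k).1 = p.1 - k.1 := fun p => rfl
  have sub2 : ∀ p : ℤ × ℤ, (p - k).2 = p.2 - k.2 := fun p => rfl
  have hS3 : ∀ p ∈ S, inGrid (3 * n) p := by
    intro p hp
    obtain ⟨a1, a2, a3, a4⟩ := hS p hp
    exact ⟨a1, by linarith, a3, by linarith⟩
  have hBval : ∀ p, inGrid (3 * n) p → ∃ e : ℤ, 0 ≤ e ∧ e ≤ 1 ∧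
      B p = 6 * n * ((p.1 - k.1) + (p.2 - k.2)) + 2 * (p.1 - k.1) + e ∧
      (p - k ∈ S → e = X (p - k)) ∧
      (p - k ∉ S → inGrid (3 * n) (p - k) → e = 1 - X (p - k)) := by
    intro p hp
    by_cases hpS : p - k ∈ S
    · obtain ⟨hx0, hx1⟩ := hX' _ (hS3 _ hpS)
      exact ⟨X (p - k), hx0, hx1, hB1 p hp hpS, fun _ => rfl, fun h _ => absurd hpS h⟩
    · by_cases hg : inGrid (3 * n) (p - k)
      · obtain ⟨hx0, hx1⟩ := hX' _ hg
        exact ⟨1 - X (p - k), by omega, by omega, hB2 p hp hpS hg,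
          fun h => absurd h hpS, fun _ _ => rfl⟩
      · refine ⟨0, le_refl 0, by norm_num, by rw [hB3 p hp hg]; ring,
          fun h => absurd (hS3 _ h) hg, fun _ hg' => absurd hg' hg⟩
  -- A injective
  have hAinj : Set.InjOn A {p | inGrid (3 * n) p} := by
    intro p hp q hq hpq
    obtain ⟨ep0, ep1⟩ := hX' p hp
    obtain ⟨eq0, eq1⟩ := hX' q hq
    have heq : 6*(n:ℤ)*(p.1+p.2) + 2*p.1 + X p = 6*(n:ℤ)*(q.1+q.2) + 2*q.1 + X q := by
      rw [← hA p hp, ← hA q hq]; exact hpq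
    obtain ⟨p1, p2, p3, p4⟩ := hp
    obtain ⟨q1, q2, q3, q4⟩ := hq
    obtain ⟨e1, e2, _⟩ := keyEq (n:ℤ) p.1 p.2 q.1 q.2 (X p) (X q) hn'
      (by linarith) (by linarith) (by linarith) ep0 ep1 eq0 eq1 heq
    exact Prod.ext_iff.mpr ⟨e1, e2⟩
  -- B injective
  have hBinj : Set.InjOn B {p | inGrid (3 * n) p} := by
    intro p hp q hq hpq
    obtain ⟨e, he0, he1, heB, -, -⟩ := hBval p hp
    obtain ⟨f, hf0, hf1, hfB, -, -⟩ := hBval q hq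
    have heq : 6*(n:ℤ)*((p.1-k.1)+(p.2-k.2)) + 2*(p.1-k.1) + e
        = 6*(n:ℤ)*((q.1-k.1)+(q.2-k.2)) + 2*(q.1-k.1) + f := by
      rw [← heB, ← hfB]; exact hpq
    obtain ⟨p1, p2, p3, p4⟩ := hp
    obtain ⟨q1, q2, q3, q4⟩ := hq
    obtain ⟨e1, e2, _⟩ := keyEq (n:ℤ) (p.1-k.1) (p.2-k.2) (q.1-k.1) (q.2-k.2) e f hn'
      (by linarith) (by linarith) (by linarith) he0 he1 hf0 hf1 heq
    exact Prod.ext_iff.mpr ⟨by omega, by omega⟩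
  -- monotonicity
  have hmono : ∀ p q, inGrid (3 * n) p → inGrid (3 * n) q →
      p.1 ≤ q.1 → p.2 ≤ q.2 → p ≠ q → A p < A q ∧ B p < B q := by
    intro p q hp hq hle1 hle2 hne
    have hne' : p.1 ≠ q.1 ∨ p.2 ≠ q.2 := by
      by_contra hc
      push_neg at hc
      exact hne (Prod.ext_iff.mpr ⟨hc.1, hc.2⟩)
    have hd : 1 ≤ (q.1 - p.1) + (q.2 - p.2) := by omega
    have hmul : 6*(n:ℤ)*1 ≤ 6*(n:ℤ)*((q.1 - p.1) + (q.2 - p.2)) :=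
      mul_le_mul_of_nonneg_left hd (by linarith)
    obtain ⟨ep0, ep1⟩ := hX' p hp
    obtain ⟨eq0, eq1⟩ := hX' q hq
    constructor
    · rw [hA p hp, hA q hq]; nlinarith [hmul]
    · obtain ⟨e, he0, he1, heB, -, -⟩ := hBval p hp
      obtain ⟨f, hf0, hf1, hfB, -, -⟩ := hBval q hq
      rw [heB, hfB]; nlinarith [hmul]
  refine ⟨⟨hAinj, hBinj, hmono⟩, ?_⟩
  intro i j hi hj
  constructor
  · intro hAB
    obtain ⟨e, he0, he1, heB, heS, heNS⟩ := hBval j hj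
    obtain ⟨ei0, ei1⟩ := hX' i hi
    have heq : 6*(n:ℤ)*(i.1+i.2) + 2*i.1 + X i
        = 6*(n:ℤ)*((j.1-k.1)+(j.2-k.2)) + 2*(j.1-k.1) + e := by
      rw [← hA i hi, ← heB]; exact hAB
    obtain ⟨i1, i2, i3, i4⟩ := hi
    obtain ⟨j1, j2, j3, j4⟩ := hj
    obtain ⟨e1, e2, e3⟩ := keyEq (n:ℤ) i.1 i.2 (j.1-k.1) (j.2-k.2) (X i) e hn'
      (by linarith) (by linarith) (by linarith) ei0 ei1 he0 he1 heq
    have hjik : j = i + k := Prod.ext_iff.mpr ⟨show j.1 = i.1 + k.1 by omega,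
      show j.2 = i.2 + k.2 by omega⟩
    have hjk_i : j - k = i := by rw [hjik]; exact add_sub_cancel_right i k
    refine ⟨?_, hjik⟩
    by_contra hiS
    have hgi : inGrid (3 * n) (j - k) := by rw [hjk_i]; exact ⟨i1, i2, i3, i4⟩
    have hcontr : e = 1 - X (j - k) := heNS (by rw [hjk_i]; exact hiS) hgi
    rw [hjk_i] at hcontr
    omega
  · rintro ⟨hiS, rfl⟩
    have hsub : i + k - k = i := add_sub_cancel_right i k
    have hmem : i + k - k ∈ S := by rw [hsub]; exact hiS
    have hBj := hB1 (i + k) hj hmem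
    rw [hA i hi, hBj, hsub]
    have h1 : (i + k).1 = i.1 + k.1 := rfl
    have h2 : (i + k).2 = i.2 + k.2 := rfl
    rw [h1, h2]; ring
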